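/- Let H = {f : ℝ^d → ℝ, f(x) = z·x for some z ∈ ℝ^d with ‖z‖₂ ≤ 2} and let γ > 0. If a set {x₁,…,xₙ} of points in the unit ball of ℝ^d (‖xᵢ‖₂ ≤ 1) is γ-shattered by H, then n ≤ 4/γ². In other words, the fat-shattering dimension of H at margin γ, restricted to the unit ball, is at most 4/γ². -/

import Mathlib

open scoped RealInnerProductSpace

/-- The set `{x₁,…,xₙ}` is `γ`-shattered by the class of linear functionals
`x ↦ z·x` with `‖z‖₂ ≤ 2`: there are witnesses `rᵢ` such that every sign pattern
`b ∈ {−1,1}ⁿ` is realized with margin `γ`. -/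
def GammaShatteredByBddHalfspaces {d n : ℕ}
    (x : Fin n → EuclideanSpace ℝ (Fin d)) (γ : ℝ) : Prop :=
  ∃ r : Fin n → ℝ,
    ∀ b : Fin n → ℝ, (∀ i, b i = 1 ∨ b i = -1) →
      ∃ z : EuclideanSpace ℝ (Fin d), ‖z‖ ≤ 2 ∧
        ∀ i, γ ≤ b i * (⟪z, x i⟫ - r i)

/-- Greedy sign choice: there is a sign vector whose signed sum has norm² ≤ card. -/
lemma exists_signs_aux {E : Type*} [NormedAddCommGroup E] [InnerProductSpace ℝ E]
    {n : ℕ} (x : Fin n → E) (hx : ∀ i, ‖x i‖ ≤ 1) (s : Finset (Fin n)) :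
    ∃ b : Fin n → ℝ, (∀ i, b i = 1 ∨ b i = -1) ∧
      ‖∑ i ∈ s, b i • x i‖ ^ 2 ≤ (s.card : ℝ) := by
  induction s using Finset.induction_on with
  | empty =>
      exact ⟨fun _ => 1, fun _ => Or.inl rfl, by simp⟩
  | insert a s ha ih =>
      obtain ⟨b, hb, hbs⟩ := ih
      set S := ∑ i ∈ s, b i • x i with hS
      set c : ℝ := if ⟪x a, S⟫ ≤ 0 then 1 else -1 with hc
      refine ⟨Function.update b a c, ?_, ?_⟩
      · intro i
        by_cases h : i = a
        · subst h; simp only [Function.update_self, hc]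
          split <;> [exact Or.inl rfl; exact Or.inr rfl]
        · simpa [Function.update_of_ne h] using hb i
      · rw [Finset.sum_insert ha, Function.update_self]
        have hsum : ∑ i ∈ s, Function.update b a c i • x i = S := by
          rw [hS]
          exact Finset.sum_congr rfl fun i hi => by
            have hne : i ≠ a := by rintro rfl; exact ha hi
            rw [Function.update_of_ne hne]
        rw [hsum]
        have hnorm : ‖c • x a + S‖ ^ 2
            = ‖c • x a‖ ^ 2 + 2 * ⟪c • x a, S⟫ + ‖S‖ ^ 2 := by
          have := @norm_add_sq_real E _ _ (c • x a) S
          linarith [this]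
        have hcs : ⟪c • x a, S⟫ ≤ 0 := by
          rw [real_inner_smul_left, hc]
          split
          · rename_i h; simpa using h
          · rename_i h; nlinarith [le_of_not_ge h]
        have hca : ‖c • x a‖ ≤ 1 := by
          rw [norm_smul]
          have : ‖c‖ = 1 := by
            rw [hc]; split <;> simp
          rw [this, one_mul]; exact hx a
        have hca2 : ‖c • x a‖ ^ 2 ≤ 1 := by nlinarith [norm_nonneg (c • x a)]
        rw [Finset.card_insert_of_notMem ha]
        push_cast
        nlinarith

/-- **Fat-shattering dimension of bounded-norm halfspaces.**  If a set of `n`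
points of the unit ball is γ-shattered by `{x ↦ z·x : ‖z‖₂ ≤ 2}`, then
`n ≤ 4/γ²`; i.e. the fat-shattering dimension at margin `γ` is at most `4/γ²`. -/
theorem fat_shattering_dimension_bound {d n : ℕ} (γ : ℝ) (hγ : 0 < γ)
    (x : Fin n → EuclideanSpace ℝ (Fin d)) (hx : ∀ i, ‖x i‖ ≤ 1)
    (hshatter : GammaShatteredByBddHalfspaces x γ) :
    (n : ℝ) ≤ 4 / γ ^ 2 := by
  obtain ⟨r, hr⟩ := hshatter
  obtain ⟨b, hb, hbnorm⟩ := exists_signs_aux x hx Finset.univ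
  rw [Finset.card_univ, Fintype.card_fin] at hbnorm
  set S : EuclideanSpace ℝ (Fin d) := ∑ i, b i • x i with hS
  set R : ℝ := ∑ i, b i * r i with hR
  -- lemma: for any valid sign vector c, nγ ≤ 2‖∑ cᵢ • xᵢ‖ + stuff
  have key : ∀ c : Fin n → ℝ, (∀ i, c i = 1 ∨ c i = -1) →
      (n : ℝ) * γ ≤ 2 * ‖∑ i, c i • x i‖ - ∑ i, c i * r i := by
    intro c hc
    obtain ⟨z, hz, hmargin⟩ := hr c hc
    have h1 : (n : ℝ) * γ ≤ ∑ i, c i * (⟪z, x i⟫ - r i) := by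
      calc (n : ℝ) * γ = ∑ _i : Fin n, γ := by
            rw [Finset.sum_const, Finset.card_univ, Fintype.card_fin, nsmul_eq_mul]
        _ ≤ _ := Finset.sum_le_sum fun i _ => hmargin i
    have h2 : ∑ i, c i * (⟪z, x i⟫ - r i)
        = ⟪z, ∑ i, c i • x i⟫ - ∑ i, c i * r i := by
      rw [inner_sum]
      simp only [real_inner_smul_right, mul_sub]
      rw [Finset.sum_sub_distrib]
    have h3 : ⟪z, ∑ i, c i • x i⟫ ≤ 2 * ‖∑ i, c i • x i‖ := by
      calc ⟪z, ∑ i, c i • x i⟫ ≤ ‖z‖ * ‖∑ i, c i • x i‖ := real_inner_le_norm _ _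
        _ ≤ 2 * ‖∑ i, c i • x i‖ := by
            have := norm_nonneg (∑ i, c i • x i)
            nlinarith
    linarith [h1, h2 ▸ h1]
  have k1 := key b hb
  have k2 := key (fun i => -(b i)) (fun i => by rcases hb i with h | h <;> simp [h])
  have hneg : ∑ i, (-(b i)) • x i = -S := by
    rw [hS, ← Finset.sum_neg_distrib]
    exact Finset.sum_congr rfl fun i _ => by rw [neg_smul]
  have hnegr : ∑ i, (-(b i)) * r i = -R := by
    rw [hR, ← Finset.sum_neg_distrib]
    exact Finset.sum_congr rfl fun i _ => by ring
  rw [hneg, hnegr, norm_neg] at k2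
  rw [← hS, ← hR] at k1
  -- Now nγ ≤ 2‖S‖ - R and nγ ≤ 2‖S‖ + R, so nγ ≤ 2‖S‖
  have hmain : (n : ℝ) * γ ≤ 2 * ‖S‖ := by linarith
  -- ‖S‖² ≤ n
  rcases Nat.eq_zero_or_pos n with hn | hn
  · subst hn; simp; positivity
  · have hnpos : (0 : ℝ) < n := by exact_mod_cast hn
    have hsq : ((n : ℝ) * γ) ^ 2 ≤ 4 * ‖S‖ ^ 2 := by
      nlinarith [norm_nonneg S, mul_nonneg (le_of_lt hnpos) hγ.le]
    rw [le_div_iff₀ (by positivity)]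
    nlinarith [hbnorm]
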